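/- Let D be a perfect matching of a dimer quiver Q that is not simple, i.e., the representation with support Q \ D is not simple. Let S be the supporting subquiver of a proper simple submodule, let α be the set of arrows outside S with tail in S, and β the set of arrows outside S with head in S. Then α ⊆ D, and D' := (D \ α) ∪ β is again a perfect matching of Q. -/

import Mathlib

open Classical

/-- A quiver given by tail and head maps on an arrow type. -/
structure QuiverData (V E : Type*) where
  t : E → V
  h : E → V

variable {V E V' E' : Type*}

/-- `n_D(p)`: the number of steps of the path `p` (a list of arrows, in traversal
order) lying in the set of arrows `D`. -/
noncomputable def nD (D : Set E) (p : List E) : ℕ :=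
  p.countP (fun e => decide (e ∈ D))

/-- `p` is a composable path: the head of each step is the tail of the next. -/
def IsPath (Q : QuiverData V E) (p : List E) : Prop :=
  p.Chain' (fun a b => Q.h a = Q.t b)

/-- `p` is a nonempty oriented cycle. -/
def IsCycle (Q : QuiverData V E) (p : List E) : Prop :=
  IsPath Q p ∧ p ≠ [] ∧
    ∃ a b, p.head? = some a ∧ p.getLast? = some b ∧ Q.h b = Q.t a

/-- `D` is a perfect matching with respect to the set `U` of unit cycles:
each unit cycle contains precisely one arrow of `D`. -/
def IsPerfectMatching (U : Set (List E)) (D : Set E) : Prop :=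
  ∀ c ∈ U, nD D c = 1

/-- Abstract combinatorial model of a dimer quiver: the distinguished unit
cycles are oriented cycles, and each arrow lies in exactly two unit cycles. -/
def IsDimer (Q : QuiverData V E) (U : Set (List E)) : Prop :=
  (∀ c ∈ U, IsCycle Q c) ∧ (∀ e : E, {c ∈ U | e ∈ c}.ncard = 2)

/-- The defining relations of the dimer algebra: `p ∼ q` whenever `pa` and `qa`
are unit cycles for a common arrow `a` (here the path `pa`, "first `a`, then `p`",
is the list `a :: p`). -/
inductive DimerRel (U : Set (List E)) : List E → List E → Prop
  | base {p q : List E} {a : E} : (a :: p) ∈ U → (a :: q) ∈ U → DimerRel U p q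

/-- The congruence on paths generated by a relation `R`: the smallest equivalence
relation containing `R` and compatible with concatenation of paths.
`PathEquiv R p q` models `p = q` modulo the ideal generated by `R`. -/
inductive PathEquiv (R : List E → List E → Prop) : List E → List E → Prop
  | of {p q : List E} : R p q → PathEquiv R p q
  | refl (p : List E) : PathEquiv R p p
  | symm {p q : List E} : PathEquiv R p q → PathEquiv R q p
  | trans {p q r : List E} : PathEquiv R p q → PathEquiv R q r → PathEquiv R p r
  | mul {p q p' q' : List E} : PathEquiv R p q → PathEquiv R p' q' →
      PathEquiv R (p ++ p') (q ++ q')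

/-- Two sets of arrows are equivalent perfect matchings when they assign the same
count to every cycle. -/
def MatchingEquiv (Q : QuiverData V E) (D D' : Set E) : Prop :=
  ∀ p, IsCycle Q p → nD D p = nD D' p

/-- An arrow is nonrigid if every perfect matching containing it is equivalent to
a perfect matching not containing it. -/
def NonrigidArrow (Q : QuiverData V E) (U : Set (List E)) (e : E) : Prop :=
  ∀ D, IsPerfectMatching U D → e ∈ D →
    ∃ D', IsPerfectMatching U D' ∧ MatchingEquiv Q D D' ∧ e ∉ D'

/-- `p` is a path from `u` to `v`. -/
def PathFromTo (Q : QuiverData V E) (p : List E) (u v : V) : Prop :=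
  IsPath Q p ∧ ((p = [] ∧ u = v) ∨
    ∃ a b, p.head? = some a ∧ p.getLast? = some b ∧ Q.t a = u ∧ Q.h b = v)

/-- A perfect matching `D` is simple if `Q \ D` is strongly connected. -/
def IsSimpleMatching (Q : QuiverData V E) (U : Set (List E)) (D : Set E) : Prop :=
  IsPerfectMatching U D ∧
    ∀ u v : V, ∃ p, PathFromTo Q p u v ∧ ∀ e ∈ p, e ∉ D

/-- `ρ`, `φ` present `Q'` as obtained from `Q` by contracting the arrows `e`
with `φ e = none` to vertices. -/
def IsContractionMap (Q : QuiverData V E) (Q' : QuiverData V' E')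
    (ρ : V → V') (φ : E → Option E') : Prop :=
  (∀ e e', φ e = some e' → Q'.t e' = ρ (Q.t e) ∧ Q'.h e' = ρ (Q.h e)) ∧
  (∀ e, φ e = none → ρ (Q.t e) = ρ (Q.h e)) ∧
  Function.Surjective ρ ∧ (∀ e' : E', ∃ e, φ e = some e')

/-- Endpoints of an arrow traversed forwards (`true`) or backwards (`false`). -/
def dirEnds (Q : QuiverData V E) : E × Bool → V × V
  | (e, true) => (Q.t e, Q.h e)
  | (e, false) => (Q.h e, Q.t e)

/-- A nonempty unoriented cycle in the underlying graph of `Q`. -/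
def IsUnorientedCycle (Q : QuiverData V E) (w : List (E × Bool)) : Prop :=
  w ≠ [] ∧ w.Chain' (fun x y => (dirEnds Q x).2 = (dirEnds Q y).1) ∧
    ∃ x y, w.head? = some x ∧ w.getLast? = some y ∧
      (dirEnds Q y).2 = (dirEnds Q x).1

/-- `c'` is a cyclic rotation of `c`. -/
def IsRotation (c c' : List E) : Prop := ∃ x y, c = x ++ y ∧ c' = y ++ x

/-- A unit cycle based at the vertex `i`: a cyclic rotation of a unit cycle whose
first arrow has tail `i`. -/
def BasedUnitCycle (Q : QuiverData V E) (U : Set (List E)) (i : V)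
    (c : List E) : Prop :=
  (∃ c₀ ∈ U, IsRotation c₀ c) ∧ ∃ a, c.head? = some a ∧ Q.t a = i


section Aux4

variable (Q : QuiverData V E) (SV : Set V) (D : Set E)

private noncomputable def stmt4Out (Q : QuiverData V E) (SV : Set V) : E → Bool :=
  fun e => decide (Q.t e ∈ SV ∧ Q.h e ∉ SV)

private noncomputable def stmt4In (Q : QuiverData V E) (SV : Set V) : E → Bool :=
  fun e => decide (Q.t e ∉ SV ∧ Q.h e ∈ SV)

private lemma stmt4_stay (hcl : ∀ a : E, a ∉ D → Q.t a ∈ SV → Q.h a ∈ SV) :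
    ∀ p : List E, p.Chain' (fun a b => Q.h a = Q.t b) → (∀ e ∈ p, e ∉ D) →
      (∀ a ∈ p.head?, Q.t a ∈ SV) → ∀ b ∈ p.getLast?, Q.h b ∈ SV := by
  intro p
  induction p with
  | nil => intro _ _ _ b hb; simp at hb
  | cons e rest ih =>
    intro hch hnd hhd b hb
    have hte : Q.t e ∈ SV := hhd e (by simp)
    have hhe : Q.h e ∈ SV := hcl e (hnd e (by simp)) hte
    cases rest with
    | nil => simp at hb; subst hb; exact hhe
    | cons e' rest' =>
      have hlink : Q.h e = Q.t e' := (List.isChain_cons_cons.mp hch).1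
      have hch' := (List.isChain_cons_cons.mp hch).2
      have := ih hch' (fun x hx => hnd x (List.mem_cons_of_mem _ hx))
        (by intro a ha; simp at ha; subst ha; rw [← hlink]; exact hhe)
      rw [List.getLast?_cons_cons] at hb
      exact this b hb

private lemma stmt4_cross :
    ∀ p : List E, p.Chain' (fun a b => Q.h a = Q.t b) →
      ∀ a b, p.head? = some a → p.getLast? = some b →
      p.countP (stmt4Out Q SV)
        + (if Q.h b ∈ SV then 1 else 0)
      = p.countP (stmt4In Q SV)
        + (if Q.t a ∈ SV then 1 else 0) := by
  intro p
  induction p with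
  | nil => intro _ a b h; simp at h
  | cons e rest ih =>
    intro hch a b ha hb
    simp only [List.head?_cons, Option.some.injEq] at ha
    subst ha
    cases rest with
    | nil =>
      simp only [List.getLast?_singleton, Option.some.injEq] at hb
      subst hb
      by_cases h1 : Q.t e ∈ SV <;> by_cases h2 : Q.h e ∈ SV <;>
        simp [stmt4Out, stmt4In, h1, h2]
    | cons e' rest' =>
      have hlink : Q.h e = Q.t e' := (List.isChain_cons_cons.mp hch).1
      have hch' := (List.isChain_cons_cons.mp hch).2
      rw [List.getLast?_cons_cons] at hb
      have hIH := ih hch' e' b rfl hb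
      rw [← hlink] at hIH
      by_cases h1 : Q.t e ∈ SV <;> by_cases h2 : Q.h e ∈ SV <;>
        simp [stmt4Out, stmt4In, List.countP_cons, h1, h2] at hIH ⊢ <;> omega

private lemma stmt4_point (hcl : ∀ a : E, a ∉ D → Q.t a ∈ SV → Q.h a ∈ SV)
    (e : E) (he : ¬(e ∈ D ∧ Q.t e ∉ SV ∧ Q.h e ∈ SV)) :
    nD ((D \ {a : E | Q.t a ∈ SV ∧ ¬(a ∉ D ∧ Q.t a ∈ SV ∧ Q.h a ∈ SV)}) ∪
        {a : E | Q.h a ∈ SV ∧ ¬(a ∉ D ∧ Q.t a ∈ SV ∧ Q.h a ∈ SV)}) [e]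
        + [e].countP (stmt4Out Q SV)
      = nD D [e]
        + [e].countP (stmt4In Q SV) := by
  simp only [nD]
  by_cases h1 : e ∈ D
  · by_cases h2 : Q.t e ∈ SV
    · by_cases h3 : Q.h e ∈ SV
      · simp [stmt4Out, stmt4In, List.countP_cons, Set.mem_union, Set.mem_diff, Set.mem_setOf_eq, h1, h2, h3]
      · simp [stmt4Out, stmt4In, List.countP_cons, Set.mem_union, Set.mem_diff, Set.mem_setOf_eq, h1, h2, h3]
    · by_cases h3 : Q.h e ∈ SV
      · exact absurd ⟨h1, h2, h3⟩ he
      · simp [stmt4Out, stmt4In, List.countP_cons, Set.mem_union, Set.mem_diff, Set.mem_setOf_eq, h1, h2, h3]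
  · by_cases h2 : Q.t e ∈ SV
    · by_cases h3 : Q.h e ∈ SV
      · simp [stmt4Out, stmt4In, List.countP_cons, Set.mem_union, Set.mem_diff, Set.mem_setOf_eq, h1, h2, h3]
      · exact absurd (hcl e h1 h2) h3
    · by_cases h3 : Q.h e ∈ SV
      · simp [stmt4Out, stmt4In, List.countP_cons, Set.mem_union, Set.mem_diff, Set.mem_setOf_eq, h1, h2, h3]
      · simp [stmt4Out, stmt4In, List.countP_cons, Set.mem_union, Set.mem_diff, Set.mem_setOf_eq, h1, h2, h3]

private lemma stmt4_count (hcl : ∀ a : E, a ∉ D → Q.t a ∈ SV → Q.h a ∈ SV) :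
    ∀ c : List E, (∀ e ∈ c, ¬(e ∈ D ∧ Q.t e ∉ SV ∧ Q.h e ∈ SV)) →
      nD ((D \ {a : E | Q.t a ∈ SV ∧ ¬(a ∉ D ∧ Q.t a ∈ SV ∧ Q.h a ∈ SV)}) ∪
        {a : E | Q.h a ∈ SV ∧ ¬(a ∉ D ∧ Q.t a ∈ SV ∧ Q.h a ∈ SV)}) c
        + c.countP (stmt4Out Q SV)
      = nD D c
        + c.countP (stmt4In Q SV) := by
  intro c
  induction c with
  | nil => intro _; simp [nD]
  | cons e rest ih =>
    intro hB
    have hrest := ih (fun x hx => hB x (List.mem_cons_of_mem _ hx))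
    have hkey := stmt4_point Q SV D hcl e (hB e (by simp))
    simp only [nD] at hkey hrest ⊢
    have hsplit : e :: rest = [e] ++ rest := rfl
    rw [hsplit, List.countP_append, List.countP_append, List.countP_append,
      List.countP_append]
    omega

private lemma stmt4_noBad (hcl : ∀ a : E, a ∉ D → Q.t a ∈ SV → Q.h a ∈ SV)
    (c : List E) (hch : c.Chain' (fun a b => Q.h a = Q.t b))
    (a b : E) (ha : c.head? = some a) (hb : c.getLast? = some b)
    (hclose : Q.h b = Q.t a) (h1 : nD D c = 1) :
    ∀ e ∈ c, ¬(e ∈ D ∧ Q.t e ∉ SV ∧ Q.h e ∈ SV) := by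
  rintro e he ⟨heD, hte, hhe⟩
  obtain ⟨x, y, rfl⟩ := List.append_of_mem he
  unfold nD at h1
  rw [List.countP_append, List.countP_cons] at h1
  simp [heD] at h1
  have hx0 : ∀ z ∈ x, z ∉ D := by
    intro z hz hzD
    have : 0 < List.countP (fun e => decide (e ∈ D)) x :=
      List.countP_pos_iff.mpr ⟨z, hz, by simp [hzD]⟩
    omega
  have hy0 : ∀ z ∈ y, z ∉ D := by
    intro z hz hzD
    have : 0 < List.countP (fun e => decide (e ∈ D)) y :=
      List.countP_pos_iff.mpr ⟨z, hz, by simp [hzD]⟩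
    omega
  obtain ⟨hchx, hchey, hlk⟩ := List.isChain_append.mp hch
  -- head of e :: y has tail h e? no: the heads along e::y stay in SV
  have hlast_ey : ∀ b' ∈ (e :: y).getLast?, Q.h b' ∈ SV := by
    intro b' hb'
    cases y with
    | nil => simp at hb'; subst hb'; exact hhe
    | cons y0 ys =>
      rw [List.getLast?_cons_cons] at hb'
      have hlink : Q.h e = Q.t y0 := (List.isChain_cons_cons.mp hchey).1
      exact stmt4_stay Q SV D hcl (y0 :: ys) (List.isChain_cons_cons.mp hchey).2
        (hy0) (by intro a' ha'; simp at ha'; subst ha'; rw [← hlink]; exact hhe)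
        b' hb'
  have hgl : (e :: y).getLast? = some ((e :: y).getLast (by simp)) :=
    List.getLast?_eq_getLast (by simp)
  have hbmem : b ∈ (e :: y).getLast? := by
    rw [List.getLast?_append, hgl, Option.some_or] at hb
    rw [hgl, hb]; rfl
  have hhb : Q.h b ∈ SV := hlast_ey b hbmem
  have hta : Q.t a ∈ SV := hclose ▸ hhb
  cases x with
  | nil =>
    simp only [List.nil_append, List.head?_cons, Option.some.injEq] at ha
    subst ha
    exact hte hta
  | cons x0 xs =>
    have ha' : x0 = a := by
      simpa using ha
    subst ha'
    have hxlast : ∀ b'' ∈ (x0 :: xs).getLast?, Q.h b'' ∈ SV :=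
      stmt4_stay Q SV D hcl (x0 :: xs) hchx hx0
        (by intro a' ha'; simp at ha'; subst ha'; exact hta)
    have hxl : (x0 :: xs).getLast? = some ((x0 :: xs).getLast (by simp)) :=
      List.getLast?_eq_getLast _
    have h4 : Q.h ((x0 :: xs).getLast (by simp)) ∈ SV := hxlast _ hxl
    have h5 := hlk ((x0 :: xs).getLast (by simp)) hxl e (by simp)
    rw [h5] at h4
    exact hte h4

end Aux4

/-- let `D` be a non-simple perfect matching, `SV` the vertex set of
the supporting subquiver `S` of a proper simple submodule (a nonempty proper set
of vertices closed under successors within `Q \ D`; the arrows of `S` are the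
arrows of `Q \ D` with both ends in `SV`).  With `α` the arrows outside `S` with
tail in `S` and `β` the arrows outside `S` with head in `S`, we have `α ⊆ D` and
`D' = (D \ α) ∪ β` is again a perfect matching. -/
theorem stmt4 [Fintype V] [Fintype E] (Q : QuiverData V E) (U : Set (List E))
    (hdimer : IsDimer Q U) (D : Set E) (hD : IsPerfectMatching U D)
    (SV : Set V) (hne : SV.Nonempty) (hproper : SV ≠ Set.univ)
    (hclosed : ∀ a : E, a ∉ D → Q.t a ∈ SV → Q.h a ∈ SV) :
    {a : E | Q.t a ∈ SV ∧ ¬(a ∉ D ∧ Q.t a ∈ SV ∧ Q.h a ∈ SV)} ⊆ D ∧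
    IsPerfectMatching U
      ((D \ {a : E | Q.t a ∈ SV ∧ ¬(a ∉ D ∧ Q.t a ∈ SV ∧ Q.h a ∈ SV)}) ∪
        {a : E | Q.h a ∈ SV ∧ ¬(a ∉ D ∧ Q.t a ∈ SV ∧ Q.h a ∈ SV)}) := by
  have halpha : {a : E | Q.t a ∈ SV ∧ ¬(a ∉ D ∧ Q.t a ∈ SV ∧ Q.h a ∈ SV)} ⊆ D := by
    intro a ha
    simp only [Set.mem_setOf_eq] at ha
    by_contra hD'
    exact ha.2 ⟨hD', ha.1, hclosed a hD' ha.1⟩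
  refine ⟨halpha, ?_⟩
  intro c hc
  obtain ⟨hch, hnil, a, b, ha, hb, hclose⟩ := hdimer.1 c hc
  have h1 : nD D c = 1 := hD c hc
  have hbal := stmt4_cross Q SV c hch a b ha hb
  rw [hclose] at hbal
  have hB := stmt4_noBad Q SV D hclosed c hch a b ha hb hclose h1
  have hcount := stmt4_count Q SV D hclosed c hB
  omega
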